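/- Let C₁ be the n×n circulant matrix Circ(𝔽_0, 𝔽_1, …, 𝔽_{n−1}) for n ≥ 1. Its spectral norm equals ∑_{k=0}^{n−1} 𝔽_k, which equals n·𝔽_n − ∑_{k=0}^{n−1} (k+1)/F_{k+1}. -/

import Mathlib

open Finset

noncomputable def harmFib (n : ℕ) : ℝ := ∑ k ∈ Finset.Icc 1 n, (1 : ℝ) / Nat.fib k

open scoped Matrix.Norms.L2Operator
open scoped Matrix

lemma harmFib_nonneg (n : ℕ) : 0 ≤ harmFib n := by
  refine Finset.sum_nonneg fun k _ => by positivity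

lemma harmFib_succ (n : ℕ) : harmFib (n + 1) = harmFib n + 1 / Nat.fib (n + 1) := by
  unfold harmFib
  rw [Finset.sum_Icc_succ_top (by omega)]

lemma part2 (n : ℕ) :
    ∑ k ∈ Finset.range n, harmFib k =
      n * harmFib n - ∑ k ∈ Finset.range n, (k + 1 : ℝ) / Nat.fib (k + 1) := by
  induction n with
  | zero => simp [harmFib]
  | succ n ih =>
    rw [Finset.sum_range_succ, Finset.sum_range_succ, ih, harmFib_succ]
    have hF : (0 : ℝ) < Nat.fib (n + 1) := by
      exact_mod_cast Nat.fib_pos.2 (Nat.succ_pos n)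
    push_cast
    field_simp
    ring

/-- Cauchy-Schwarz step. -/
lemma cs_step {m : Type*} [Fintype m] (a x : m → ℝ) (ha : ∀ j, 0 ≤ a j) :
    (∑ j, a j * x j) ^ 2 ≤ (∑ j, a j) * (∑ j, a j * x j ^ 2) := by
  have h := Finset.sum_mul_sq_le_sq_mul_sq Finset.univ
    (fun j => Real.sqrt (a j)) (fun j => Real.sqrt (a j) * x j)
  have e1 : ∀ j : m, Real.sqrt (a j) * (Real.sqrt (a j) * x j) = a j * x j := by
    intro j; rw [← mul_assoc, Real.mul_self_sqrt (ha j)]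
  have e2 : ∀ j : m, Real.sqrt (a j) ^ 2 = a j := fun j => Real.sq_sqrt (ha j)
  have e3 : ∀ j : m, (Real.sqrt (a j) * x j) ^ 2 = a j * x j ^ 2 := by
    intro j; rw [mul_pow, e2]
  calc (∑ j, a j * x j) ^ 2 = (∑ j, Real.sqrt (a j) * (Real.sqrt (a j) * x j)) ^ 2 := by
        simp_rw [e1]
    _ ≤ (∑ j, Real.sqrt (a j) ^ 2) * ∑ j, (Real.sqrt (a j) * x j) ^ 2 := h
    _ = (∑ j, a j) * (∑ j, a j * x j ^ 2) := by simp_rw [e2, e3]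

theorem stmt_12 (n : ℕ) (hn : 1 ≤ n) :
    ‖(Matrix.of (fun i j : Fin n => harmFib ((j - i : Fin n) : ℕ)) : Matrix (Fin n) (Fin n) ℝ)‖ =
        ∑ k ∈ Finset.range n, harmFib k ∧
      ∑ k ∈ Finset.range n, harmFib k =
        n * harmFib n - ∑ k ∈ Finset.range n, (k + 1 : ℝ) / Nat.fib (k + 1) := by
  set A : Matrix (Fin n) (Fin n) ℝ :=
    Matrix.of (fun i j : Fin n => harmFib ((j - i : Fin n) : ℕ)) with hA
  set s : ℝ := ∑ k ∈ Finset.range n, harmFib k with hs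
  haveI : NeZero n := ⟨by omega⟩
  have hs0 : 0 ≤ s := Finset.sum_nonneg fun k _ => harmFib_nonneg k
  have hnonneg : ∀ i j : Fin n, 0 ≤ A i j := fun i j => harmFib_nonneg _
  -- row sums
  have hrow : ∀ i : Fin n, ∑ j, A i j = s := by
    intro i
    rw [hs, ← Fin.sum_univ_eq_sum_range (fun k => harmFib k) n]
    exact Fintype.sum_equiv (Equiv.subRight i) _ _ (fun j => rfl)
  -- column sums
  have hcol : ∀ j : Fin n, ∑ i, A i j = s := by
    intro j
    rw [hs, ← Fin.sum_univ_eq_sum_range (fun k => harmFib k) n]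
    exact Fintype.sum_equiv (Equiv.subLeft j) _ _ (fun i => rfl)
  refine ⟨?_, part2 n⟩
  -- upper bound
  have hub : ‖A‖ ≤ s := by
    rw [Matrix.l2_opNorm_def]
    refine ContinuousLinearMap.opNorm_le_bound _ hs0 ?_
    intro x
    have hax : ((Matrix.toEuclideanLin.trans LinearMap.toContinuousLinearMap A) x :
        EuclideanSpace ℝ (Fin n)) =
        (WithLp.equiv 2 (Fin n → ℝ)).symm (A *ᵥ ((WithLp.equiv 2 (Fin n → ℝ)) x)) := rfl
    rw [hax]
    set y : Fin n → ℝ := (WithLp.equiv 2 (Fin n → ℝ)) x with hy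
    have hxy : ‖x‖ = Real.sqrt (∑ j, y j ^ 2) := by
      rw [EuclideanSpace.norm_eq]
      congr 1
      refine Finset.sum_congr rfl fun j _ => ?_
      rw [Real.norm_eq_abs, sq_abs]; rfl
    rw [EuclideanSpace.norm_eq]
    have key : ∑ i, ‖(A *ᵥ y) i‖ ^ 2 ≤ s ^ 2 * ∑ j, y j ^ 2 := by
      have h1 : ∀ i : Fin n, ‖(A *ᵥ y) i‖ ^ 2 ≤ s * ∑ j, A i j * y j ^ 2 := by
        intro i
        rw [Real.norm_eq_abs, sq_abs]
        calc ((A *ᵥ y) i) ^ 2 = (∑ j, A i j * y j) ^ 2 := rfl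
          _ ≤ (∑ j, A i j) * (∑ j, A i j * y j ^ 2) :=
              cs_step (A i) y (hnonneg i)
          _ = s * ∑ j, A i j * y j ^ 2 := by rw [hrow i]
      calc ∑ i, ‖(A *ᵥ y) i‖ ^ 2 ≤ ∑ i : Fin n, s * ∑ j, A i j * y j ^ 2 :=
            Finset.sum_le_sum fun i _ => h1 i
        _ = s * ∑ j, (∑ i, A i j) * y j ^ 2 := by
            rw [← Finset.mul_sum, Finset.sum_comm]
            congr 1
            exact Finset.sum_congr rfl fun j _ => (Finset.sum_mul _ _ _).symm
        _ = s ^ 2 * ∑ j, y j ^ 2 := by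
            simp_rw [hcol]
            rw [← Finset.mul_sum]; ring
    have h2 : ∀ i : Fin n,
        ‖((WithLp.equiv 2 (Fin n → ℝ)).symm (A *ᵥ y) : EuclideanSpace ℝ (Fin n)) i‖ ^ 2
          = ‖(A *ᵥ y) i‖ ^ 2 := fun i => rfl
    calc Real.sqrt (∑ i, ‖((WithLp.equiv 2 (Fin n → ℝ)).symm (A *ᵥ y) :
            EuclideanSpace ℝ (Fin n)) i‖ ^ 2)
        = Real.sqrt (∑ i, ‖(A *ᵥ y) i‖ ^ 2) := by simp_rw [h2]
      _ ≤ Real.sqrt (s ^ 2 * ∑ j, y j ^ 2) := Real.sqrt_le_sqrt key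
      _ = s * Real.sqrt (∑ j, y j ^ 2) := by
          rw [Real.sqrt_mul (sq_nonneg s), Real.sqrt_sq hs0]
      _ = s * ‖x‖ := by rw [hxy]
  -- lower bound
  have hlb : s ≤ ‖A‖ := by
    have h := A.l2_opNorm_mulVec ((WithLp.equiv 2 (Fin n → ℝ)).symm (fun _ => 1))
    have hone : ((WithLp.equiv 2 (Fin n → ℝ)) ((WithLp.equiv 2 (Fin n → ℝ)).symm
        (fun _ : Fin n => (1 : ℝ)))) = fun _ : Fin n => (1 : ℝ) := rfl
    have hmul : A *ᵥ ((WithLp.equiv 2 (Fin n → ℝ)).symm (fun _ => 1)) = fun _ : Fin n => s := by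
      funext i
      show ∑ j, A i j * (1 : ℝ) = s
      simp [hrow i]
    have hnormc : ∀ (c : ℝ), 0 ≤ c →
        ‖((WithLp.equiv 2 (Fin n → ℝ)).symm (fun _ : Fin n => c) :
          EuclideanSpace ℝ (Fin n))‖ = c * Real.sqrt n := by
      intro c hc
      rw [EuclideanSpace.norm_eq]
      have : ∀ i : Fin n, ‖((WithLp.equiv 2 (Fin n → ℝ)).symm (fun _ : Fin n => c) :
          EuclideanSpace ℝ (Fin n)) i‖ ^ 2 = c ^ 2 := by
        intro i; rw [Real.norm_eq_abs, sq_abs]; rfl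
      simp_rw [this]
      rw [Finset.sum_const, Finset.card_univ, Fintype.card_fin, nsmul_eq_mul,
        Real.sqrt_mul (by positivity), Real.sqrt_sq hc, mul_comm]
    have heq : (EuclideanSpace.equiv (Fin n) ℝ).symm (A *ᵥ ((WithLp.equiv 2 (Fin n → ℝ)).symm
        (fun _ => 1))) = ((WithLp.equiv 2 (Fin n → ℝ)).symm (fun _ : Fin n => s) :
        EuclideanSpace ℝ (Fin n)) := by
      rw [hmul]; rfl
    rw [heq, hnormc s hs0, hnormc 1 zero_le_one, one_mul] at h
    have hsn : (0 : ℝ) < Real.sqrt n := Real.sqrt_pos.2 (by exact_mod_cast hn)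
    exact le_of_mul_le_mul_right h hsn
  exact le_antisymm hub hlb
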